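/- Let q be a finite-dimensional Lie algebra over an infinite field k, and let q = ⊕_{i=0}^{p} q_i be a direct sum decomposition into subspaces; for t ∈ k^×, let φ_t ∈ GL(q) be defined by φ_t(x) = t^i·x for x ∈ q_i. Assume φ is m-special for some integer m ≥ 1: there are bilinear maps B₀, B_m : q × q → q with B_m ≠ 0 such that φ_t^{-1}([φ_t(x), φ_t(y)]) = B₀(x,y) + t^m·B_m(x,y) for all t ∈ k^× and all x, y ∈ q. Define D : q → q by D(x) = i·x for x ∈ q_i. Then [·,·]''_D = −m·[·,·]'_D (so D is a near-derivation of q) and [·,·]'_D = −m·B_m; consequently B₀ and B_m are compatible Lie brackets on q. -/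

import Mathlib

/-- The derived operation of a binary operation with respect to a map `D`. -/
def derivedOp {V : Type*} [AddCommGroup V] (D : V → V) :
    (V → V → V) → (V → V → V) :=
  fun ψ x y => D (ψ x y) - ψ (D x) y - ψ x (D y)

/-- A binary operation is a Lie bracket if it is alternating and satisfies the Jacobi
identity. -/
def IsLieBracket {V : Type*} [AddCommGroup V] (B : V → V → V) : Prop :=
  (∀ x : V, B x x = 0) ∧
  (∀ x y z : V, B (B x y) z + B (B y z) x + B (B z x) y = 0)

lemma aux_poly {k V : Type*} [Field k] [Infinite k] [AddCommGroup V] [Module k V]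
    (N : ℕ) (c : ℕ → V)
    (h : ∀ t : k, t ≠ 0 → ∑ e ∈ Finset.range N, t ^ e • c e = 0) :
    ∀ e, e < N → c e = 0 := by
  intro e he
  rw [← Module.forall_dual_apply_eq_zero_iff k]
  intro f
  set P : Polynomial k :=
    ∑ e ∈ Finset.range N, Polynomial.C (f (c e)) * Polynomial.X ^ e with hP
  have hroot : ∀ t : k, t ≠ 0 → P.eval t = 0 := by
    intro t ht
    have h1 : P.eval t = ∑ e ∈ Finset.range N, f (c e) * t ^ e := by
      simp [hP, Polynomial.eval_finset_sum]
    have h2 : f (∑ e ∈ Finset.range N, t ^ e • c e)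
        = ∑ e ∈ Finset.range N, f (c e) * t ^ e := by
      rw [map_sum]
      exact Finset.sum_congr rfl fun e _ => by rw [map_smul, smul_eq_mul, mul_comm]
    rw [h1, ← h2, h t ht, map_zero]
  have hP0 : P = 0 := by
    apply Polynomial.eq_zero_of_infinite_isRoot
    refine Set.Infinite.mono (s := ({0}ᶜ : Set k)) (fun t ht => hroot t ht) ?_
    exact (Set.finite_singleton 0).infinite_compl
  have hco : P.coeff e = f (c e) := by
    rw [hP, Polynomial.finset_sum_coeff]
    rw [Finset.sum_eq_single_of_mem e (Finset.mem_range.2 he)]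
    · simp
    · intro b _ hb
      simp [Polynomial.coeff_C_mul, Polynomial.coeff_X_pow, Ne.symm hb]
  rw [← hco, hP0, Polynomial.coeff_zero]

lemma aux_single_smul {k V : Type*} [Semiring k] [AddCommMonoid V] [Module k V]
    (N a : ℕ) (ha : a < N) (t : k) (v : V) :
    ∑ e ∈ Finset.range N, t ^ e • (if e = a then v else 0) = t ^ a • v := by
  rw [Finset.sum_eq_single_of_mem a (Finset.mem_range.2 ha)]
  · simp
  · intro b _ hb; simp [hb]

lemma aux_jac3 {L : Type*} [LieRing L] (a b c : L) :
    ⁅⁅a, b⁆, c⁆ + ⁅⁅b, c⁆, a⁆ + ⁅⁅c, a⁆, b⁆ = 0 := by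
  have h := lie_jacobi a b c
  have h2 : ⁅⁅a, b⁆, c⁆ + ⁅⁅b, c⁆, a⁆ + ⁅⁅c, a⁆, b⁆
      = -(⁅a, ⁅b, c⁆⁆ + ⁅b, ⁅c, a⁆⁆ + ⁅c, ⁅a, b⁆⁆) := by
    rw [← lie_skew c ⁅a,b⁆, ← lie_skew a ⁅b,c⁆, ← lie_skew b ⁅c,a⁆]
    abel
  rw [h2, h, neg_zero]

theorem m_special_near_derivation
    {k : Type*} [Field k] [Infinite k] {L : Type*} [LieRing L] [LieAlgebra k L]
    [FiniteDimensional k L]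
    (p : ℕ) (Q : ℕ → Submodule k L)
    (hQbdd : ∀ i, p < i → Q i = ⊥)
    (hdec : DirectSum.IsInternal Q)
    (φ : kˣ → (L ≃ₗ[k] L))
    (hφ : ∀ (t : kˣ) (i : ℕ), ∀ x ∈ Q i, φ t x = ((t : k) ^ i) • x)
    (m : ℕ) (hm : 1 ≤ m)
    (B₀ Bm : L →ₗ[k] L →ₗ[k] L) (hBm : Bm ≠ 0)
    (hspecial : ∀ (t : kˣ) (x y : L),
      (φ t).symm ⁅φ t x, φ t y⁆ = B₀ x y + ((t : k) ^ m) • Bm x y)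
    (D : L →ₗ[k] L)
    (hD : ∀ i : ℕ, ∀ x ∈ Q i, D x = (i : k) • x) :
    (∀ x y : L,
      (derivedOp ⇑D)^[2] (fun x y => ⁅x, y⁆) x y
        = -(m : k) • derivedOp ⇑D (fun x y => ⁅x, y⁆) x y) ∧
    (∀ x y : L, derivedOp ⇑D (fun x y => ⁅x, y⁆) x y = -(m : k) • Bm x y) ∧
    IsLieBracket (fun x y => B₀ x y) ∧
    IsLieBracket (fun x y => Bm x y) ∧
    IsLieBracket (fun x y => B₀ x y + Bm x y) := by
  classical
  -- projections
  set e0 : (DirectSum ℕ fun i => ↥(Q i)) ≃ₗ[k] L :=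
    LinearEquiv.ofBijective (DirectSum.coeLinearMap Q) hdec with he0
  set π : ℕ → L →ₗ[k] L := fun l =>
    (Q l).subtype ∘ₗ (DirectSum.component k ℕ (fun i => ↥(Q i)) l) ∘ₗ
      e0.symm.toLinearMap with hπ
  have hπapp : ∀ l x, π l x = ((e0.symm x) l : L) := fun l x => rfl
  have hπmem : ∀ l x, π l x ∈ Q l := fun l x => ((e0.symm x) l).2
  have hπ_same : ∀ j x, x ∈ Q j → π j x = x := by
    intro j x hx
    rw [hπapp, hdec.ofBijective_coeLinearMap_of_mem hx]
  have hπ_ne : ∀ n j, j ≠ n → ∀ x, x ∈ Q j → π n x = 0 := by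
    intro n j hjn x hx
    rw [hπapp, hdec.ofBijective_coeLinearMap_of_mem_ne hjn hx, Submodule.coe_zero]
  have hπ_bot : ∀ n, p < n → ∀ x, π n x = 0 := by
    intro n hn x
    have := hπmem n x
    rw [hQbdd n hn] at this
    simpa using this
  have hsum : ∀ x : L, ∑ l ∈ Finset.range (p+1), π l x = x := by
    intro x
    have hx : x ∈ ⨆ i, Q i := by
      rw [hdec.submodule_iSup_eq_top]; trivial
    refine Submodule.iSup_induction Q
      (motive := fun x => ∑ l ∈ Finset.range (p+1), π l x = x) hx ?_ (by simp) ?_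
    · intro j x hxj
      by_cases hj : j ≤ p
      · rw [Finset.sum_eq_single_of_mem j (Finset.mem_range.2 (by omega))]
        · exact hπ_same j x hxj
        · intro b _ hb
          exact hπ_ne b j (Ne.symm hb) x hxj
      · have hx0 : x = 0 := by
          have := hQbdd j (by omega)
          rw [this] at hxj
          simpa using hxj
        simp [hx0]
    · intro a b ha hb
      simp only [map_add, Finset.sum_add_distrib, ha, hb]
  have hφeq : ∀ (t : kˣ) (x : L),
      φ t x = ∑ l ∈ Finset.range (p+1), ((t:k) ^ l) • π l x := by
    intro t x
    conv_lhs => rw [← hsum x]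
    rw [map_sum]
    exact Finset.sum_congr rfl fun l _ => hφ t l _ (hπmem l x)
  have hφ1 : ∀ x : L, φ 1 x = x := by
    intro x
    rw [hφeq]
    simpa using hsum x
  have hbr : ∀ x y : L, ⁅x, y⁆ = B₀ x y + Bm x y := by
    intro x y
    have h := hspecial 1 x y
    have hid : (φ 1).symm ⁅φ 1 x, φ 1 y⁆ = ⁅x, y⁆ := by
      rw [hφ1 x, hφ1 y]
      have := hφ1 ((φ 1).symm ⁅x, y⁆)
      rw [LinearEquiv.apply_symm_apply] at this
      exact this.symm
    rw [hid] at h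
    simpa using h
  have hspec' : ∀ (t : kˣ) (x y : L),
      ⁅φ t x, φ t y⁆ = φ t (B₀ x y) + ((t:k) ^ m) • φ t (Bm x y) := by
    intro t x y
    have h := congrArg (φ t) (hspecial t x y)
    rwa [LinearEquiv.apply_symm_apply, map_add, map_smul] at h
  -- orthogonality of projections
  have hππ : ∀ n l (z : L), π n (π l z) = if n = l then π n z else 0 := by
    intro n l z
    by_cases h' : n = l
    · subst h'
      rw [if_pos rfl]
      exact hπ_same n (π n z) (hπmem n z)
    · rw [if_neg h']
      exact hπ_ne n l (Ne.symm h') _ (hπmem l z)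
  -- main homogeneous component computation
  have hcomp : ∀ (i j n : ℕ) (x y : L), x ∈ Q i → y ∈ Q j →
      (n ≠ i + j → π n (B₀ x y) = 0) ∧ (n + m ≠ i + j → π n (Bm x y) = 0) := by
    intro i j n x y hx hy
    by_cases hn : n ≤ p
    swap
    · exact ⟨fun _ => hπ_bot n (by omega) _, fun _ => hπ_bot n (by omega) _⟩
    have key : ∀ t : kˣ, ((t:k) ^ (i+j)) • π n (B₀ x y) + ((t:k) ^ (i+j)) • π n (Bm x y)
        = ((t:k) ^ n) • π n (B₀ x y) + ((t:k) ^ (n+m)) • π n (Bm x y) := by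
      intro t
      have h := hspec' t x y
      rw [hφ t i x hx, hφ t j y hy, smul_lie, lie_smul, smul_smul, ← pow_add,
        hbr x y, hφeq t (B₀ x y), hφeq t (Bm x y)] at h
      have h2 := congrArg (π n) h
      have e1 : ∀ w : L, π n (∑ l ∈ Finset.range (p+1), ((t:k) ^ l) • π l w)
          = ((t:k) ^ n) • π n w := by
        intro w
        rw [map_sum, Finset.sum_eq_single_of_mem n (Finset.mem_range.2 (by omega))]
        · rw [map_smul, hππ, if_pos rfl]
        · intro b _ hb
          rw [map_smul, hππ, if_neg (Ne.symm hb), smul_zero]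
      rw [map_smul, map_add, map_add, map_smul, e1, e1, smul_add, smul_smul,
        ← pow_add, Nat.add_comm m n] at h2
      exact h2
    -- coefficient extraction
    set a := π n (B₀ x y) with ha
    set b := π n (Bm x y) with hb
    set N := i + j + n + m + 1 with hN
    have hc := aux_poly (k := k) N
      (fun e => (if e = i + j then a else 0) + (if e = i + j then b else 0)
        + (if e = n then -a else 0) + (if e = n + m then -b else 0)) ?_
    · constructor
      · intro hne
        have := hc n (by omega)
        rw [if_neg (by omega), if_neg (by omega), if_pos rfl, if_neg (by omega)] at this
        simpa using this
      · intro hne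
        have := hc (n + m) (by omega)
        rw [if_neg (by omega), if_neg (by omega), if_neg (by omega), if_pos rfl] at this
        simpa using this
    · intro t ht
      have key' := key (Units.mk0 t ht)
      simp only [Units.val_mk0] at key'
      simp only [smul_add, Finset.sum_add_distrib,
        aux_single_smul N (i+j) (by omega) t a,
        aux_single_smul N (i+j) (by omega) t b,
        aux_single_smul N n (by omega) t (-a),
        aux_single_smul N (n+m) (by omega) t (-b)]
      rw [key', smul_neg, smul_neg]
      abel
  -- action of D on values of B₀ and Bm
  have hD0 : ∀ (i j : ℕ) (x y : L), x ∈ Q i → y ∈ Q j →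
      D (B₀ x y) = ((i:k) + (j:k)) • B₀ x y := by
    intro i j x y hx hy
    conv_lhs => rw [← hsum (B₀ x y)]
    conv_rhs => rw [← hsum (B₀ x y)]
    rw [map_sum, Finset.smul_sum]
    refine Finset.sum_congr rfl fun l _ => ?_
    rw [hD l _ (hπmem _ _)]
    by_cases hl : l = i + j
    · subst hl; push_cast; ring_nf
    · rw [(hcomp i j l x y hx hy).1 hl, smul_zero, smul_zero]
  have hDm : ∀ (i j : ℕ) (x y : L), x ∈ Q i → y ∈ Q j →
      D (Bm x y) = ((i:k) + (j:k) - (m:k)) • Bm x y := by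
    intro i j x y hx hy
    conv_lhs => rw [← hsum (Bm x y)]
    conv_rhs => rw [← hsum (Bm x y)]
    rw [map_sum, Finset.smul_sum]
    refine Finset.sum_congr rfl fun l _ => ?_
    rw [hD l _ (hπmem _ _)]
    by_cases hl : l + m = i + j
    · have h2 : ((l:ℕ):k) + (m:k) = (i:k) + (j:k) := by
        exact_mod_cast congrArg (Nat.cast (R := k)) hl
      have h3 : (l:k) = (i:k) + (j:k) - (m:k) := by linear_combination h2
      rw [h3]
    · rw [(hcomp i j l x y hx hy).2 hl, smul_zero, smul_zero]
  -- bilinear extension principle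
  have hext : ∀ (F G : L →ₗ[k] L →ₗ[k] L),
      (∀ (i j : ℕ) (x y : L), x ∈ Q i → y ∈ Q j → F x y = G x y) → F = G := by
    intro F G h
    have htop : ∀ z : L, z ∈ ⨆ i, Q i := by
      intro z; rw [hdec.submodule_iSup_eq_top]; trivial
    have main : ∀ x y : L, F x y = G x y := by
      intro x y
      refine Submodule.iSup_induction Q (motive := fun x => F x y = G x y) (htop x)
        ?_ (by simp) ?_
      · intro i x hxi
        refine Submodule.iSup_induction Q (motive := fun y => F x y = G x y) (htop y)
          (fun j y hyj => h i j x y hxi hyj) (by simp) ?_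
        · intro u v hu hv
          simp only [map_add, hu, hv]
      · intro u v hu hv
        simp only [map_add, LinearMap.add_apply, hu, hv]
    ext x y
    exact main x y
  -- bracket as a bilinear map
  set br : L →ₗ[k] L →ₗ[k] L := LinearMap.mk₂ k (fun x y => ⁅x, y⁆) add_lie smul_lie lie_add lie_smul with hbr'
  have hbrap : ∀ x y : L, br x y = ⁅x, y⁆ := fun x y => rfl
  -- the two key identities
  have key1 : ∀ x y : L, D ⁅x, y⁆ - ⁅D x, y⁆ - ⁅x, D y⁆ = -(m:k) • Bm x y := by
    have hP1 : br.compr₂ D - br.comp D - br.compl₂ D = (-(m:k)) • Bm := by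
      apply hext
      intro i j x y hx hy
      simp only [LinearMap.sub_apply, LinearMap.compr₂_apply, LinearMap.coe_comp,
        Function.comp_apply, LinearMap.compl₂_apply, LinearMap.smul_apply]
      rw [hbrap, hbrap, hbrap, hD i x hx, hD j y hy, hbr x y, map_add,
        hD0 i j x y hx hy, hDm i j x y hx hy, smul_lie, lie_smul, hbr x y]
      match_scalars <;> push_cast <;> ring
    intro x y
    have h := LinearMap.congr_fun (LinearMap.congr_fun hP1 x) y
    simpa only [LinearMap.sub_apply, LinearMap.compr₂_apply, LinearMap.coe_comp,
      Function.comp_apply, LinearMap.compl₂_apply, LinearMap.smul_apply,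
      hbrap] using h
  have key2 : ∀ x y : L, D (Bm x y) - Bm (D x) y - Bm x (D y) = -(m:k) • Bm x y := by
    have hP2 : Bm.compr₂ D - Bm.comp D - Bm.compl₂ D = (-(m:k)) • Bm := by
      apply hext
      intro i j x y hx hy
      simp only [LinearMap.sub_apply, LinearMap.compr₂_apply, LinearMap.coe_comp,
        Function.comp_apply, LinearMap.compl₂_apply, LinearMap.smul_apply]
      rw [hD i x hx, hD j y hy, hDm i j x y hx hy, map_smul, LinearMap.smul_apply,
        map_smul]
      match_scalars <;> push_cast <;> ring
    intro x y
    have h := LinearMap.congr_fun (LinearMap.congr_fun hP2 x) y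
    simpa only [LinearMap.sub_apply, LinearMap.compr₂_apply, LinearMap.coe_comp,
      Function.comp_apply, LinearMap.compl₂_apply, LinearMap.smul_apply] using h
  -- Lie bracket statements via polynomial identities
  have halt : ∀ x : L, B₀ x x = 0 ∧ Bm x x = 0 := by
    intro x
    have hc := aux_poly (k := k) (m+1)
      (fun e => (if e = 0 then B₀ x x else 0) + (if e = m then Bm x x else 0)) ?_
    · constructor
      · have := hc 0 (by omega)
        rw [if_pos rfl, if_neg (by omega)] at this
        simpa using this
      · have := hc m (by omega)
        rw [if_neg (by omega), if_pos rfl] at this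
        simpa using this
    · intro t ht
      have h := hspecial (Units.mk0 t ht) x x
      simp only [lie_self, map_zero, Units.val_mk0] at h
      simp only [smul_add, Finset.sum_add_distrib,
        aux_single_smul (m+1) 0 (by omega) t (B₀ x x),
        aux_single_smul (m+1) m (by omega) t (Bm x x)]
      rw [pow_zero, one_smul, ← h]
  have hjac : ∀ x y z : L,
      (B₀ (B₀ x y) z + B₀ (B₀ y z) x + B₀ (B₀ z x) y = 0) ∧
      ((B₀ (Bm x y) z + Bm (B₀ x y) z) + (B₀ (Bm y z) x + Bm (B₀ y z) x)
        + (B₀ (Bm z x) y + Bm (B₀ z x) y) = 0) ∧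
      (Bm (Bm x y) z + Bm (Bm y z) x + Bm (Bm z x) y = 0) := by
    intro x y z
    set A := B₀ (B₀ x y) z + B₀ (B₀ y z) x + B₀ (B₀ z x) y with hA
    set C := (B₀ (Bm x y) z + Bm (B₀ x y) z) + (B₀ (Bm y z) x + Bm (B₀ y z) x)
        + (B₀ (Bm z x) y + Bm (B₀ z x) y) with hC
    set E := Bm (Bm x y) z + Bm (Bm y z) x + Bm (Bm z x) y with hE
    have hc := aux_poly (k := k) (2*m+1)
      (fun e => (if e = 0 then A else 0) + (if e = m then C else 0)
        + (if e = 2*m then E else 0)) ?_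
    · refine ⟨?_, ?_, ?_⟩
      · have := hc 0 (by omega)
        rw [if_pos rfl, if_neg (by omega), if_neg (by omega)] at this
        simpa using this
      · have := hc m (by omega)
        rw [if_neg (by omega), if_pos rfl, if_neg (by omega)] at this
        simpa using this
      · have := hc (2*m) (by omega)
        rw [if_neg (by omega), if_neg (by omega), if_pos rfl] at this
        simpa using this
    · intro t0 ht0
      set t : kˣ := Units.mk0 t0 ht0 with htdef
      have hX : ∀ a b c : L, (φ t).symm ⁅⁅φ t a, φ t b⁆, φ t c⁆
          = B₀ (B₀ a b) c + ((t:k)^m) • B₀ (Bm a b) c + ((t:k)^m) • Bm (B₀ a b) c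
            + ((t:k)^(2*m)) • Bm (Bm a b) c := by
        intro a b c
        have h1 := hspecial t ((φ t).symm ⁅φ t a, φ t b⁆) c
        rw [LinearEquiv.apply_symm_apply] at h1
        rw [h1, hspecial t a b]
        rw [map_add, LinearMap.add_apply, map_smul, LinearMap.smul_apply,
          map_add, LinearMap.add_apply, map_smul, LinearMap.smul_apply,
          smul_add, smul_smul, ← pow_add, two_mul]
        abel
      have hsum3 : A + ((t:k)^m) • C + ((t:k)^(2*m)) • E = 0 := by
        have h1 := hX x y z
        have h2 := hX y z x
        have h3 := hX z x y
        have hca : A + ((t:k)^m) • C + ((t:k)^(2*m)) • E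
            = (φ t).symm ⁅⁅φ t x, φ t y⁆, φ t z⁆
              + (φ t).symm ⁅⁅φ t y, φ t z⁆, φ t x⁆
              + (φ t).symm ⁅⁅φ t z, φ t x⁆, φ t y⁆ := by
          rw [h1, h2, h3, hA, hC, hE]
          simp only [smul_add]
          abel
        rw [hca, ← map_add, ← map_add, aux_jac3, map_zero]
      have hcoe : (t : k) = t0 := rfl
      rw [hcoe] at hsum3
      simp only [smul_add, Finset.sum_add_distrib,
        aux_single_smul (2*m+1) 0 (by omega) t0 A,
        aux_single_smul (2*m+1) m (by omega) t0 C,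
        aux_single_smul (2*m+1) (2*m) (by omega) t0 E]
      rw [pow_zero, one_smul]
      exact hsum3
  -- assembly
  refine ⟨?_, ?_, ?_, ?_, ?_⟩
  · intro x y
    have hfun : derivedOp ⇑D (fun x y => ⁅x, y⁆) = fun x y => -(m:k) • Bm x y := by
      funext a b
      exact key1 a b
    have hit : (derivedOp ⇑D)^[2] (fun x y => ⁅x, y⁆)
        = derivedOp ⇑D (derivedOp ⇑D (fun x y => ⁅x, y⁆)) := rfl
    rw [hit, hfun]
    show D (-(m:k) • Bm x y) - (-(m:k) • Bm (D x) y) - (-(m:k) • Bm x (D y))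
      = -(m:k) • (-(m:k) • Bm x y)
    rw [map_smul, ← smul_sub, ← smul_sub, key2 x y]
  · intro x y
    exact key1 x y
  · exact ⟨fun x => (halt x).1, fun x y z => (hjac x y z).1⟩
  · exact ⟨fun x => (halt x).2, fun x y z => (hjac x y z).2.2⟩
  · constructor
    · intro x
      show B₀ x x + Bm x x = 0
      rw [(halt x).1, (halt x).2, add_zero]
    · intro x y z
      simp only [map_add, LinearMap.add_apply]
      have h1 := (hjac x y z).1
      have h2 := (hjac x y z).2.1
      have h3 := (hjac x y z).2.2
      calc B₀ (B₀ x y) z + B₀ (Bm x y) z + (Bm (B₀ x y) z + Bm (Bm x y) z)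
            + (B₀ (B₀ y z) x + B₀ (Bm y z) x + (Bm (B₀ y z) x + Bm (Bm y z) x))
            + (B₀ (B₀ z x) y + B₀ (Bm z x) y + (Bm (B₀ z x) y + Bm (Bm z x) y))
          = (B₀ (B₀ x y) z + B₀ (B₀ y z) x + B₀ (B₀ z x) y)
            + ((B₀ (Bm x y) z + Bm (B₀ x y) z) + (B₀ (Bm y z) x + Bm (B₀ y z) x)
              + (B₀ (Bm z x) y + Bm (B₀ z x) y))
            + (Bm (Bm x y) z + Bm (Bm y z) x + Bm (Bm z x) y) := by abel
        _ = 0 := by rw [h1, h2, h3]; simp
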